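/- Let n, t be positive integers with 3t ≤ n and δ > 0 with 4δt ≥ 1. Any deterministic one-way protocol with distributional error at most δ for exactly solving the 2-block partitioning problem on the hard distribution 𝒴×𝒵 must use at least log₂( C(n−3t+2, t) / (8·C(t, ⌊4δt⌋)·n^{4δt}) ) bits of communication. -/

import Mathlib

open scoped Classical

/-- Bottleneck of the 2-partitioning of the list `L` splitting after the first `s`
elements. -/
def bnL (L : List ℕ) (s : ℕ) : ℕ := max (L.take s).sum (L.drop s).sum

/-- `s` is an optimal separator for partitioning `L` into two contiguous blocks. -/
def IsOptSep (L : List ℕ) (s : ℕ) : Prop :=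
  s ≤ L.length ∧ ∀ s' ≤ L.length, bnL L s ≤ bnL L s'

/-- Alice's hard input determined by a choice `b` of which of the `n − 3t + 2`
symbol slots carry a pair `11` (the rest carry a `0`), preceded by `2(t−1)` ones. -/
def yList (t : ℕ) (b : List Bool) : List ℕ :=
  List.replicate (2 * (t - 1)) 1 ++ (b.map (fun c => if c then [1, 1] else [0])).flatten

/-- Bob's hard input `1^{4(i−1)} 0^{n − 4(i−1)}`. -/
def zList (n i : ℕ) : List ℕ :=
  List.replicate (4 * (i - 1)) 1 ++ List.replicate (n - 4 * (i - 1)) 0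

namespace Stmt16Aux

lemma pre_mono (L : List ℕ) {s s' : ℕ} (h : s ≤ s') :
    (L.take s).sum ≤ (L.take s').sum := by
  have h1 : L.take s = (L.take s').take s := by
    rw [List.take_take, min_eq_left h]
  calc (L.take s).sum = ((L.take s').take s).sum := by rw [← h1]
    _ ≤ ((L.take s').take s).sum + ((L.take s').drop s).sum := Nat.le_add_right _ _
    _ = (L.take s').sum := by rw [← List.sum_append, List.take_append_drop]

lemma pre_add_drop (L : List ℕ) (s : ℕ) :
    (L.take s).sum + (L.drop s).sum = L.sum := by
  rw [← List.sum_append, List.take_append_drop]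

def g (c : Bool) : List ℕ := if c then [1, 1] else [0]

lemma flat_len (m : List Bool) :
    ((m.map g).flatten).length = ((m.map fun c => if c then 2 else 1)).sum := by
  induction m with
  | nil => simp
  | cons c m ih => cases c <;> (simp [g, ih]; try omega)

lemma flat_sum (m : List Bool) :
    ((m.map g).flatten).sum = ((m.map fun c => if c then 2 else 0)).sum := by
  induction m with
  | nil => simp
  | cons c m ih => cases c <;> (simp [g, ih]; try omega)

variable {N t : ℕ}

lemma count_below (b : Fin N → Bool)
    (hb : (Finset.univ.filter fun k => b k = true).card = t) (i : Fin t) :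
    (Finset.univ.filter fun k : Fin N => b k = true ∧
      (k : ℕ) < ((Finset.univ.filter fun k => b k = true).orderEmbOfFin hb i : ℕ)).card
      = (i : ℕ) := by
  set sf := Finset.univ.filter fun k => b k = true with hsf
  set emb := sf.orderEmbOfFin hb with hemb
  have hrange := Finset.range_orderEmbOfFin sf hb
  have himg : (Finset.univ.filter fun k : Fin N => b k = true ∧ (k : ℕ) < (emb i : ℕ))
      = Finset.image emb (Finset.Iio i) := by
    ext x
    simp only [Finset.mem_filter, Finset.mem_univ, true_and, Finset.mem_image,
      Finset.mem_Iio]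
    constructor
    · rintro ⟨hbx, hlt⟩
      have hx : x ∈ sf := by simp [hsf, hbx]
      have : x ∈ Set.range emb := by rw [hrange]; exact hx
      obtain ⟨j, hj⟩ := this
      refine ⟨j, ?_, hj⟩
      have : emb j < emb i := by rw [hj]; exact Fin.lt_def.mpr hlt
      exact emb.lt_iff_lt.mp this
    · rintro ⟨j, hji, hj⟩
      have hmem : emb j ∈ sf := Finset.orderEmbOfFin_mem sf hb j
      have hbx : b x = true := by rw [← hj]; exact (Finset.mem_filter.mp hmem).2
      refine ⟨hbx, ?_⟩
      have : emb j < emb i := emb.lt_iff_lt.mpr hji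
      rw [← hj]
      exact Fin.lt_def.mp this
  rw [himg, Finset.card_image_of_injective _ emb.injective, Fin.card_Iio]

/-- The key uniqueness lemma: any optimal separator for `Y_b ++ Z_i` equals
`2(t-1) + p_i + i + 1` where `p_i` is the position of the (i+1)-th pair. -/
lemma key (n : ℕ) (ht : 1 ≤ t) (b : Fin N → Bool)
    (hb : (Finset.univ.filter fun k => b k = true).card = t) (i : Fin t) (s : ℕ)
    (h : IsOptSep (yList t (List.ofFn b) ++ zList n ((i : ℕ) + 1)) s) :
    s = 2 * (t - 1) +
      ((Finset.univ.filter fun k => b k = true).orderEmbOfFin hb i : ℕ) + (i : ℕ) + 1 := by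
  classical
  set sf := Finset.univ.filter fun k => b k = true with hsf
  set emb := sf.orderEmbOfFin hb with hemb
  set p : ℕ := (emb i : ℕ) with hp
  have hpN : p < N := (emb i).2
  set l : List Bool := List.ofFn b with hl
  have hllen : l.length = N := by simp [hl]
  set R : List ℕ := List.replicate (2 * (t - 1)) 1 with hR
  set A : List ℕ := ((l.take p).map g).flatten with hA
  set B : List ℕ := ((l.drop (p + 1)).map g).flatten with hB
  set Z : List ℕ := zList n ((i : ℕ) + 1) with hZ
  -- counting in the prefix
  set Q := Finset.univ.filter fun k : Fin N => (k : ℕ) < p with hQ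
  have hQcard : Q.card = p := by
    have : Q = Finset.Iio (⟨p, hpN⟩ : Fin N) := by
      ext k; simp [hQ, Finset.mem_Iio, Fin.lt_def]
    rw [this, Fin.card_Iio]
  have hQt : (Q.filter fun k => b k = true).card = (i : ℕ) := by
    have h2 : (Q.filter fun k => b k = true)
        = Finset.univ.filter fun k : Fin N => b k = true ∧ (k : ℕ) < p := by
      ext k
      simp only [hQ, Finset.filter_filter, Finset.mem_filter, Finset.mem_univ, true_and]
      tauto
    rw [h2]
    exact count_below b hb i
  -- sums over prefix slots
  have hsum1 : (((l.take p).map fun c : Bool => if c then 2 else 1)).sum = p + (i : ℕ) := by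
    rw [List.map_take, hl, List.map_ofFn, List.sum_take_ofFn]
    have : ∀ k : Fin N, ((fun c : Bool => if c then 2 else 1) ∘ b) k
        = 1 + (if b k = true then 1 else 0) := by
      intro k; by_cases hbk : b k = true <;> simp [hbk]
    rw [Finset.sum_congr rfl fun k _ => this k, Finset.sum_add_distrib]
    rw [Finset.sum_const, Finset.sum_boole]
    simp only [smul_eq_mul, mul_one]
    rw [← hQ, hQcard]
    norm_cast
    rw [hQt]
  have hsum2 : (((l.take p).map fun c : Bool => if c then 2 else 0)).sum = 2 * (i : ℕ) := by
    rw [List.map_take, hl, List.map_ofFn, List.sum_take_ofFn]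
    have : ∀ k : Fin N, ((fun c : Bool => if c then 2 else 0) ∘ b) k
        = 2 * (if b k = true then 1 else 0) := by
      intro k; by_cases hbk : b k = true <;> simp [hbk]
    rw [Finset.sum_congr rfl fun k _ => this k, ← Finset.mul_sum, Finset.sum_boole]
    rw [← hQ]
    norm_cast
    rw [hQt]
  have hAlen : A.length = p + (i : ℕ) := by rw [hA, flat_len, hsum1]
  have hAsum : A.sum = 2 * (i : ℕ) := by rw [hA, flat_sum, hsum2]
  -- the i-th slot is a pair
  have hbtrue : b ⟨p, hpN⟩ = true := by
    have hmem : emb i ∈ sf := Finset.orderEmbOfFin_mem sf hb i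
    have : (⟨p, hpN⟩ : Fin N) = emb i := by apply Fin.ext; rfl
    rw [this]
    exact (Finset.mem_filter.mp hmem).2
  -- decomposition of the flattened middle part
  have hF : (l.map g).flatten = A ++ 1 :: 1 :: B := by
    conv_lhs => rw [← List.take_append_drop p l]
    rw [List.map_append, List.flatten_append, ← hA]
    have hplt : p < l.length := by rw [hllen]; exact hpN
    have hdrop : l.drop p = true :: l.drop (p + 1) := by
      rw [List.drop_eq_getElem_cons hplt]
      have hgl : l[p]'hplt = true := by
        simp only [hl]
        rw [List.getElem_ofFn]
        exact hbtrue
      rw [hgl]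
    rw [hdrop]
    simp [g, hB]
  -- total sums
  have hFsum : (l.map g).flatten.sum = 2 * t := by
    rw [flat_sum, hl, List.map_ofFn, List.sum_ofFn]
    have : ∀ k : Fin N, ((fun c : Bool => if c then 2 else 0) ∘ b) k
        = 2 * (if b k = true then 1 else 0) := by
      intro k; by_cases hbk : b k = true <;> simp [hbk]
    rw [Finset.sum_congr rfl fun k _ => this k, ← Finset.mul_sum, Finset.sum_boole]
    norm_cast
    rw [← hsf, hb]
  have hZsum : Z.sum = 4 * (i : ℕ) := by
    simp [hZ, zList, List.sum_replicate]
  -- the big list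
  set L : List ℕ := yList t l ++ Z with hLdef
  have hY : yList t l = R ++ (l.map g).flatten := rfl
  have hL : L = (R ++ A) ++ (1 :: 1 :: (B ++ Z)) := by
    rw [hLdef, hY, hF]
    simp [List.append_assoc]
  set s₀ : ℕ := 2 * (t - 1) + p + (i : ℕ) with hs₀
  have hRA : (R ++ A).length = s₀ := by
    rw [List.length_append, hR, List.length_replicate, hAlen, hs₀]; omega
  have hRAsum : (R ++ A).sum = 2 * (t - 1) + 2 * (i : ℕ) := by
    rw [List.sum_append, hR, List.sum_replicate, hAsum]; simp
  have htk : ∀ k, L.take (s₀ + k) = (R ++ A) ++ (1 :: 1 :: (B ++ Z)).take k := by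
    intro k
    rw [hL, List.take_append,
      List.take_of_length_le (by rw [hRA]; omega), hRA, Nat.add_sub_cancel_left]
  set H : ℕ := 2 * (t - 1) + 2 * (i : ℕ) + 1 with hH
  have hP0 : (L.take s₀).sum + 1 = H := by
    have := htk 0
    simp only [Nat.add_zero] at this
    rw [this]
    simp [hRAsum, hH]
  have hP1 : (L.take (s₀ + 1)).sum = H := by
    rw [htk 1, List.sum_append, hRAsum]
    simp [hH]; try omega
  have hP2 : (L.take (s₀ + 2)).sum = H + 1 := by
    rw [htk 2, List.sum_append, hRAsum]
    simp [hH]; try omega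
  have hT : L.sum = 2 * H := by
    rw [hLdef, List.sum_append, hY, List.sum_append, hR, List.sum_replicate, hFsum, hZsum, hH]
    simp; try omega
  have hs1len : s₀ + 1 ≤ L.length := by
    rw [hL, List.length_append, hRA]
    simp; try omega
  obtain ⟨hsle, hopt⟩ := h
  have hble := hopt (s₀ + 1) hs1len
  have hD1 : (L.drop (s₀ + 1)).sum = H := by
    have := pre_add_drop L (s₀ + 1)
    rw [hP1, hT] at this; omega
  have hbn1 : bnL L (s₀ + 1) = H := by
    rw [bnL, hP1, hD1, max_self]
  rw [hbn1, bnL, max_le_iff] at hble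
  obtain ⟨hPle, hDle⟩ := hble
  have hPD := pre_add_drop L s
  have hPs : (L.take s).sum = H := by rw [hT] at hPD; omega
  rcases Nat.lt_or_ge s (s₀ + 1) with hlt | hge
  · exfalso
    have := pre_mono L (Nat.lt_succ_iff.mp hlt)
    rw [hPs] at this; omega
  · rcases Nat.lt_or_ge s (s₀ + 2) with hlt2 | hge2
    · omega
    · exfalso
      have := pre_mono L hge2
      rw [hPs, hP2] at this; omega




lemma choose_le_pow_mul (t j d : ℕ) (h : j + d ≤ t) :
    t.choose j ≤ t ^ d * t.choose (j + d) := by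
  induction d with
  | zero => simpa using Nat.le_refl _
  | succ d ih =>
    have h' : j + d ≤ t := by omega
    have step : t.choose (j + d) ≤ t * t.choose (j + d + 1) := by
      have h2 := Nat.choose_succ_right_eq t (j + d)
      have h3 : 1 ≤ t - (j + d) := by omega
      calc t.choose (j + d) ≤ t.choose (j + d) * (t - (j + d)) :=
            Nat.le_mul_of_pos_right _ h3
        _ = t.choose (j + d + 1) * (j + d + 1) := h2.symm
        _ ≤ t.choose (j + d + 1) * t := Nat.mul_le_mul_left _ (by omega)
        _ = t * t.choose (j + d + 1) := Nat.mul_comm _ _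
    calc t.choose j ≤ t ^ d * t.choose (j + d) := ih h'
      _ ≤ t ^ d * (t * t.choose (j + d + 1)) := Nat.mul_le_mul_left _ step
      _ = t ^ (d + 1) * t.choose (j + (d + 1)) := by ring_nf
    
lemma geo2 (m : ℕ) : ∑ d ∈ Finset.range m, ((2 : ℝ)⁻¹) ^ d ≤ 2 := by
  rw [geom_sum_eq (by norm_num)]
  rw [div_le_iff_of_neg (by norm_num)]
  have h : (0 : ℝ) ≤ (2⁻¹ : ℝ) ^ m := by positivity
  linarith

lemma term_le {n t N : ℕ} (hN : N ≤ n) (h2t : 2 * t ≤ n) {j j₄ : ℕ}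
    (hj : j ≤ j₄) (hj₄ : j₄ ≤ t) :
    t.choose j * N ^ j * 2 ^ (j₄ - j) ≤ t.choose j₄ * n ^ j₄ := by
  set d := j₄ - j with hd
  have hjd : j + d = j₄ := by omega
  calc t.choose j * N ^ j * 2 ^ d
      ≤ (t ^ d * t.choose j₄) * n ^ j * 2 ^ d := by
        apply Nat.mul_le_mul _ le_rfl
        exact Nat.mul_le_mul (hjd ▸ choose_le_pow_mul t j d (by omega))
          (Nat.pow_le_pow_left hN j)
    _ = t.choose j₄ * ((2 * t) ^ d * n ^ j) := by rw [mul_pow]; ring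
    _ ≤ t.choose j₄ * (n ^ d * n ^ j) :=
        Nat.mul_le_mul_left _ (Nat.mul_le_mul_right _ (Nat.pow_le_pow_left h2t d))
    _ = t.choose j₄ * n ^ j₄ := by rw [← pow_add, show d + j = j₄ by omega]

lemma S_card {N t : ℕ} :
    (Finset.univ.filter fun b : Fin N → Bool =>
      (Finset.univ.filter fun k => b k = true).card = t).card = N.choose t := by
  have h := Finset.card_powersetCard t (Finset.univ : Finset (Fin N))
  rw [Finset.card_univ, Fintype.card_fin] at h
  rw [← h]
  apply Finset.card_bij (fun b _ => Finset.univ.filter fun k => b k = true)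
  · intro b hb
    rw [Finset.mem_powersetCard]
    exact ⟨Finset.filter_subset _ _, (Finset.mem_filter.mp hb).2⟩
  · intro b₁ h₁ b₂ h₂ heq
    funext k
    rw [Bool.eq_iff_iff]
    have := Finset.ext_iff.mp heq k
    simpa using this
  · intro E hE
    refine ⟨fun k => decide (k ∈ E), ?_, ?_⟩
    · have hfe : (Finset.univ.filter fun k : Fin N => decide (k ∈ E) = true) = E := by
        ext k; simp
      rw [Finset.mem_filter]
      exact ⟨Finset.mem_univ _, by rw [hfe]; exact (Finset.mem_powersetCard.mp hE).2⟩
    · ext k; simp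

lemma class_bound {N t K : ℕ} (hNpos : 0 < N) (n : ℕ) (ht : 1 ≤ t)
    (msg : (Fin N → Bool) → Fin K) (out : Fin K → Fin t → ℕ) (j₄ : ℕ) (m : Fin K)
    (G : Finset (Fin N → Bool))
    (hG : ∀ b ∈ G, (Finset.univ.filter fun k => b k = true).card = t ∧
      (Finset.univ.filter (fun i : Fin t =>
        ¬ IsOptSep (yList t (List.ofFn b) ++ zList n ((i : ℕ) + 1)) (out (msg b) i))).card ≤ j₄) :
    (G.filter fun b => msg b = m).card ≤ ∑ j ∈ Finset.range (j₄ + 1), t.choose j * N ^ j := by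
  classical
  set errF : (Fin N → Bool) → Finset (Fin t) := fun b =>
    Finset.univ.filter (fun i : Fin t =>
      ¬ IsOptSep (yList t (List.ofFn b) ++ zList n ((i : ℕ) + 1)) (out (msg b) i)) with herrF
  set posOf : (Fin N → Bool) → Fin t → Fin N := fun b i =>
    if hcard : (Finset.univ.filter fun k => b k = true).card = t then
      (Finset.univ.filter fun k => b k = true).orderEmbOfFin hcard i
    else ⟨0, hNpos⟩ with hposOf
  set Cls := G.filter fun b => msg b = m with hCls
  set Es := (Finset.univ : Finset (Fin t)).powerset.filter fun E => E.card ≤ j₄ with hEs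
  have hfib : Cls.card = ∑ E ∈ Es, (Cls.filter fun b => errF b = E).card := by
    apply Finset.card_eq_sum_card_fiberwise
    intro b hb
    rw [Finset.mem_coe, hEs, Finset.mem_filter, Finset.mem_powerset]
    exact ⟨Finset.subset_univ _, (hG b (Finset.mem_filter.mp hb).1).2⟩
  have hfiber : ∀ E ∈ Es, (Cls.filter fun b => errF b = E).card ≤ N ^ E.card := by
    intro E _
    have hcard_univ : ((Finset.univ : Finset ({x // x ∈ E} → Fin N))).card = N ^ E.card := by
      rw [Finset.card_univ, Fintype.card_fun, Fintype.card_fin, Fintype.card_coe]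
    rw [← hcard_univ]
    apply Finset.card_le_card_of_injOn (fun b => fun x : {x // x ∈ E} => posOf b x.1)
      (fun b _ => Finset.mem_univ _)
    intro b₁ hb₁ b₂ hb₂ hf
    rw [Finset.mem_coe, Finset.mem_filter] at hb₁ hb₂
    obtain ⟨hb₁c, hE₁⟩ := hb₁
    obtain ⟨hb₂c, hE₂⟩ := hb₂
    rw [hCls, Finset.mem_filter] at hb₁c hb₂c
    obtain ⟨hG₁, hm₁⟩ := hb₁c
    obtain ⟨hG₂, hm₂⟩ := hb₂c
    have hcard₁ := (hG b₁ hG₁).1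
    have hcard₂ := (hG b₂ hG₂).1
    have hpos_eq : ∀ i : Fin t, posOf b₁ i = posOf b₂ i := by
      intro i
      by_cases hiE : i ∈ E
      · exact congrFun hf ⟨i, hiE⟩
      · have hi₁ : i ∉ errF b₁ := by rw [hE₁]; exact hiE
        have hi₂ : i ∉ errF b₂ := by rw [hE₂]; exact hiE
        simp only [herrF, Finset.mem_filter, Finset.mem_univ, true_and, not_not] at hi₁ hi₂
        have hk₁ := key n ht b₁ hcard₁ i _ hi₁
        have hk₂ := key n ht b₂ hcard₂ i _ hi₂
        rw [hm₁] at hk₁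
        rw [hm₂] at hk₂
        have hval : ((Finset.univ.filter fun k => b₁ k = true).orderEmbOfFin hcard₁ i : ℕ)
            = ((Finset.univ.filter fun k => b₂ k = true).orderEmbOfFin hcard₂ i : ℕ) := by
          omega
        simp only [hposOf, dif_pos hcard₁, dif_pos hcard₂]
        exact Fin.ext hval
    have hembfun : ⇑((Finset.univ.filter fun k => b₁ k = true).orderEmbOfFin hcard₁)
        = ⇑((Finset.univ.filter fun k => b₂ k = true).orderEmbOfFin hcard₂) := by
      funext i
      have h := hpos_eq i
      simpa only [hposOf, dif_pos hcard₁, dif_pos hcard₂] using h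
    have hsf : (Finset.univ.filter fun k => b₁ k = true)
        = (Finset.univ.filter fun k => b₂ k = true) := by
      apply Finset.coe_injective
      rw [← Finset.range_orderEmbOfFin _ hcard₁, ← Finset.range_orderEmbOfFin _ hcard₂, hembfun]
    funext k
    rw [Bool.eq_iff_iff]
    have h := Finset.ext_iff.mp hsf k
    simpa using h
  calc Cls.card = ∑ E ∈ Es, (Cls.filter fun b => errF b = E).card := hfib
    _ ≤ ∑ E ∈ Es, N ^ E.card := Finset.sum_le_sum hfiber
    _ ≤ ∑ j ∈ Finset.range (j₄ + 1), t.choose j * N ^ j := by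
        have h1 : ∑ E ∈ Es, N ^ E.card
            = ∑ E ∈ (Finset.univ : Finset (Fin t)).powerset,
                if E.card ≤ j₄ then N ^ E.card else 0 := by
          rw [hEs, Finset.sum_filter]
        rw [h1, Finset.sum_powerset]
        have h2 : ∀ j, ∑ E ∈ Finset.powersetCard j (Finset.univ : Finset (Fin t)),
            (if E.card ≤ j₄ then N ^ E.card else 0) = if j ≤ j₄ then t.choose j * N ^ j else 0 := by
          intro j
          have hc : ∀ E ∈ Finset.powersetCard j (Finset.univ : Finset (Fin t)),
              (if E.card ≤ j₄ then N ^ E.card else 0) = if j ≤ j₄ then N ^ j else 0 := by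
            intro E hE
            rw [(Finset.mem_powersetCard.mp hE).2]
          rw [Finset.sum_congr rfl hc, Finset.sum_const, Finset.card_powersetCard,
            Finset.card_univ, Fintype.card_fin, smul_eq_mul, mul_ite, mul_zero]
        rw [Finset.sum_congr rfl fun j _ => h2 j, ← Finset.sum_filter]
        apply Finset.sum_le_sum_of_subset
        intro j hj
        rw [Finset.mem_filter] at hj
        rw [Finset.mem_range]
        omega

lemma SB_le {n t j₄ N : ℕ} (hn : 1 ≤ n) (hNn : N ≤ n) (h2t : 2 * t ≤ n)
    (hj₄t : j₄ ≤ t) (ρ : ℝ) (hρ : ((n : ℝ) ^ (j₄ : ℕ) : ℝ) ≤ ρ) :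
    ((∑ j ∈ Finset.range (j₄ + 1), t.choose j * N ^ j : ℕ) : ℝ)
      ≤ 2 * (t.choose j₄ : ℝ) * ρ := by
  have hterm : ∀ j ∈ Finset.range (j₄ + 1),
      ((t.choose j * N ^ j : ℕ) : ℝ)
        ≤ ((t.choose j₄ * n ^ j₄ : ℕ) : ℝ) * (2⁻¹ : ℝ) ^ (j₄ - j) := by
    intro j hj
    rw [Finset.mem_range] at hj
    have hnat := term_le hNn h2t (by omega : j ≤ j₄) hj₄t
    have h1 : ((t.choose j * N ^ j : ℕ) : ℝ) * 2 ^ (j₄ - j)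
        ≤ ((t.choose j₄ * n ^ j₄ : ℕ) : ℝ) := by
      have h2 := (Nat.cast_le (α := ℝ)).mpr hnat
      push_cast at h2 ⊢
      linarith
    rw [inv_pow, ← div_eq_mul_inv, le_div_iff₀ (by positivity)]
    exact h1
  have hC'nn : (0 : ℝ) ≤ ((t.choose j₄ * n ^ j₄ : ℕ) : ℝ) := by positivity
  calc ((∑ j ∈ Finset.range (j₄ + 1), t.choose j * N ^ j : ℕ) : ℝ)
      = ∑ j ∈ Finset.range (j₄ + 1), ((t.choose j * N ^ j : ℕ) : ℝ) := by push_cast; ring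
    _ ≤ ∑ j ∈ Finset.range (j₄ + 1), ((t.choose j₄ * n ^ j₄ : ℕ) : ℝ) * (2⁻¹ : ℝ) ^ (j₄ - j) :=
        Finset.sum_le_sum hterm
    _ = ((t.choose j₄ * n ^ j₄ : ℕ) : ℝ) * ∑ j ∈ Finset.range (j₄ + 1), (2⁻¹ : ℝ) ^ (j₄ - j) := by
        rw [Finset.mul_sum]
    _ ≤ ((t.choose j₄ * n ^ j₄ : ℕ) : ℝ) * 2 := by
        apply mul_le_mul_of_nonneg_left _ hC'nn
        have hrefl := Finset.sum_range_reflect (fun d => (2⁻¹ : ℝ) ^ d) (j₄ + 1)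
        have heq : ∑ j ∈ Finset.range (j₄ + 1), (2⁻¹ : ℝ) ^ (j₄ - j)
            = ∑ j ∈ Finset.range (j₄ + 1), (2⁻¹ : ℝ) ^ j := by
          rw [← hrefl]
          apply Finset.sum_congr rfl
          intro j hj
          congr 1 <;> omega
        rw [heq]
        exact geo2 _
    _ = 2 * (t.choose j₄ : ℝ) * ((n : ℝ) ^ (j₄ : ℕ)) := by push_cast; ring
    _ ≤ 2 * (t.choose j₄ : ℝ) * ρ := by
        apply mul_le_mul_of_nonneg_left hρ (by positivity)

end Stmt16Aux

/-- for `n, t ≥ 1`, `3t ≤ n`, `δ > 0` with `4δt ≥ 1`, any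
deterministic one-way protocol (message `msg b ∈ Fin K`, output `out`) that solves
the 2-block partitioning problem exactly on the hard distribution `𝒴 × 𝒵`
(uniform `b` with exactly `t` pair-slots, uniform `i ∈ {1,…,t}`) with
distributional error at most `δ` must communicate at least
`log₂( C(n−3t+2, t) / (8·C(t,⌊4δt⌋)·n^{4δt}) )` bits, i.e.
`log₂ K` is at least that quantity. -/
theorem stmt16 (n t : ℕ) (δ : ℝ) (hn : 1 ≤ n) (ht : 1 ≤ t) (h3t : 3 * t ≤ n)
    (hδ : 0 < δ) (hδt : (1 : ℝ) ≤ 4 * δ * t)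
    (K : ℕ) (msg : (Fin (n - 3 * t + 2) → Bool) → Fin K)
    (out : Fin K → Fin t → ℕ)
    (herr :
      ((∑ b ∈ Finset.univ.filter
            (fun b : Fin (n - 3 * t + 2) → Bool =>
              (Finset.univ.filter (fun k => b k = true)).card = t),
          (Finset.univ.filter (fun i : Fin t =>
            ¬ IsOptSep (yList t (List.ofFn b) ++ zList n ((i : ℕ) + 1))
                (out (msg b) i))).card : ℝ))
        ≤ δ * (((n - 3 * t + 2).choose t : ℝ) * t)) :
    Real.logb 2 (((n - 3 * t + 2).choose t : ℝ) /
        (8 * (t.choose ⌊4 * δ * (t : ℝ)⌋₊ : ℝ) * (n : ℝ) ^ (4 * δ * (t : ℝ))))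
      ≤ Real.logb 2 K := by
  classical
  have hKpos : 0 < K := (msg fun _ => false).pos
  have hlogK : 0 ≤ Real.logb 2 K :=
    Real.logb_nonneg (by norm_num) (by exact_mod_cast hKpos)
  set j₄ := ⌊4 * δ * (t : ℝ)⌋₊ with hj₄
  by_cases htN : t ≤ (n - 3 * t + 2)
  swap
  · have h0 : (n - 3 * t + 2).choose t = 0 := Nat.choose_eq_zero_of_lt (by omega)
    rw [h0]
    norm_num
    exact hlogK
  by_cases hj₄t : j₄ ≤ t
  swap
  · have h0 : t.choose j₄ = 0 := Nat.choose_eq_zero_of_lt (by omega)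
    rw [h0]
    norm_num
    exact hlogK
  -- main case
  have hNn : (n - 3 * t + 2) ≤ n := by omega
  have h2t : 2 * t ≤ n := by omega
  have hρpos : (0 : ℝ) < (n : ℝ) ^ (4 * δ * (t : ℝ)) :=
    Real.rpow_pos_of_pos (by exact_mod_cast hn) _
  have hC'pos : (0 : ℝ) < (t.choose j₄ : ℝ) := by
    exact_mod_cast Nat.choose_pos hj₄t
  have hCpos : (0 : ℝ) < ((n - 3 * t + 2).choose t : ℝ) := by
    exact_mod_cast Nat.choose_pos htN
  set S := Finset.univ.filter
    (fun b : Fin (n - 3 * t + 2) → Bool => (Finset.univ.filter (fun k => b k = true)).card = t) with hS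
  set errF : (Fin (n - 3 * t + 2) → Bool) → Finset (Fin t) := fun b =>
    Finset.univ.filter (fun i : Fin t =>
      ¬ IsOptSep (yList t (List.ofFn b) ++ zList n ((i : ℕ) + 1)) (out (msg b) i)) with herrF
  set C : ℝ := ((n - 3 * t + 2).choose t : ℝ) with hC
  -- split into good and bad
  set Bad := S.filter fun b => ¬ (errF b).card ≤ j₄ with hBad
  set Good := S.filter fun b => (errF b).card ≤ j₄ with hGood
  have hsplit : Good.card + Bad.card = S.card :=
    Finset.card_filter_add_card_filter_not _
  have hScard : (S.card : ℝ) = C := by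
    rw [hS, Stmt16Aux.S_card, hC]
  -- Markov
  have hBadle : (Bad.card : ℝ) ≤ C / 4 := by
    have hmono : (Bad.card : ℝ) * ((j₄ : ℝ) + 1) ≤ δ * (C * t) := by
      have h1 : ∀ b ∈ Bad, ((j₄ : ℝ) + 1) ≤ ((errF b).card : ℝ) := by
        intro b hb
        have := (Finset.mem_filter.mp hb).2
        have h2 : j₄ + 1 ≤ (errF b).card := by omega
        exact_mod_cast h2
      have h2 := Finset.card_nsmul_le_sum Bad (fun b => ((errF b).card : ℝ)) _ h1
      rw [nsmul_eq_mul] at h2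
      refine h2.trans (le_trans ?_ herr)
      apply Finset.sum_le_sum_of_subset_of_nonneg
      · rw [hBad]; exact Finset.filter_subset _ _
      · intro b _ _; positivity
    have h4δ : (4 * δ * t : ℝ) ≤ (j₄ : ℝ) + 1 := (Nat.lt_floor_add_one _).le
    have hpos4 : (0 : ℝ) < 4 * δ * t := lt_of_lt_of_le one_pos hδt
    have h1 : (Bad.card : ℝ) * (4 * δ * t) ≤ (C / 4) * (4 * δ * t) := by
      have := le_trans (mul_le_mul_of_nonneg_left h4δ (by positivity)) hmono
      calc (Bad.card : ℝ) * (4 * δ * t) ≤ δ * (C * t) := this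
        _ = (C / 4) * (4 * δ * t) := by ring
    exact le_of_mul_le_mul_right h1 hpos4
  have hGoodge : 3 / 4 * C ≤ (Good.card : ℝ) := by
    have : (Good.card : ℝ) + (Bad.card : ℝ) = C := by
      rw [← hScard]; exact_mod_cast hsplit
    linarith
  -- class bound
  have hNpos : 0 < (n - 3 * t + 2) := by omega
  set SB := ∑ j ∈ Finset.range (j₄ + 1), t.choose j * (n - 3 * t + 2) ^ j with hSB
  have hclass : ∀ m : Fin K, (Good.filter fun b => msg b = m).card ≤ SB := by
    intro m
    apply Stmt16Aux.class_bound hNpos n ht msg out j₄ m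
    intro b hb
    rw [hGood, Finset.mem_filter] at hb
    exact ⟨(Finset.mem_filter.mp hb.1).2, hb.2⟩
  have hGoodK : Good.card ≤ K * SB := by
    have h1 : Good.card = ∑ m ∈ Finset.univ, (Good.filter fun b => msg b = m).card :=
      Finset.card_eq_sum_card_fiberwise fun b _ => Finset.mem_univ _
    rw [h1]
    calc ∑ m ∈ Finset.univ, (Good.filter fun b => msg b = m).card
        ≤ ∑ _m ∈ (Finset.univ : Finset (Fin K)), SB := Finset.sum_le_sum fun m _ => hclass m
      _ = K * SB := by rw [Finset.sum_const, Finset.card_univ, Fintype.card_fin, smul_eq_mul]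
  -- real bound on SB
  have hρ : ((n : ℝ) ^ (j₄ : ℕ) : ℝ) ≤ (n : ℝ) ^ (4 * δ * (t : ℝ)) := by
    rw [← Real.rpow_natCast (n : ℝ) j₄]
    apply Real.rpow_le_rpow_of_exponent_le (by exact_mod_cast hn)
    exact Nat.floor_le (by positivity)
  have hSBle : ((SB : ℕ) : ℝ) ≤ 2 * (t.choose j₄ : ℝ) * (n : ℝ) ^ (4 * δ * (t : ℝ)) :=
    Stmt16Aux.SB_le hn hNn h2t hj₄t _ hρ
  -- combine
  have hX : (0 : ℝ) ≤ (K : ℝ) * ((t.choose j₄ : ℝ) * (n : ℝ) ^ (4 * δ * (t : ℝ))) := by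
    positivity
  have hmain : C ≤ (K : ℝ) * (8 * (t.choose j₄ : ℝ) * (n : ℝ) ^ (4 * δ * (t : ℝ))) := by
    have h1 : (Good.card : ℝ) ≤ (K : ℝ) * (SB : ℝ) := by exact_mod_cast hGoodK
    have h2 : (K : ℝ) * (SB : ℝ)
        ≤ (K : ℝ) * (2 * (t.choose j₄ : ℝ) * (n : ℝ) ^ (4 * δ * (t : ℝ))) :=
      mul_le_mul_of_nonneg_left hSBle (by positivity)
    linarith only [hGoodge, h1, h2, hX]
  have hdenpos : (0 : ℝ) < 8 * (t.choose j₄ : ℝ) * (n : ℝ) ^ (4 * δ * (t : ℝ)) :=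
    mul_pos (mul_pos (by norm_num) hC'pos) hρpos
  have hratio : C / (8 * (t.choose j₄ : ℝ) * (n : ℝ) ^ (4 * δ * (t : ℝ))) ≤ (K : ℝ) := by
    rw [div_le_iff₀ hdenpos]
    linarith only [hmain]
  exact Real.logb_le_logb_of_le (by norm_num) (div_pos hCpos hdenpos) hratio
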